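/- The function g(θ) = arccos(((π − θ)cos θ + sin θ)/π) satisfies |g'(θ)| ≤ 1 for all θ ∈ (0, π), i.e., g is 1-Lipschitz on [0, π]. -/

import Mathlib

open Real

noncomputable def g (θ : ℝ) : ℝ :=
  Real.arccos (((π - θ) * Real.cos θ + Real.sin θ) / π)

lemma key_nonneg {θ : ℝ} (h0 : 0 ≤ θ) (hπ : θ ≤ π) :
    ((π - θ) * sin θ) ^ 2 ≤ π ^ 2 - ((π - θ) * cos θ + sin θ) ^ 2 := by
  have hs : sin θ ≤ θ := Real.sin_le h0
  have hs2 : Real.sin (2 * θ) ≤ 2 * θ := Real.sin_le (by linarith)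
  have hsn : 0 ≤ sin θ := Real.sin_nonneg_of_nonneg_of_le_pi h0 hπ
  have h2 : Real.sin (2 * θ) = 2 * sin θ * cos θ := Real.sin_two_mul θ
  have hpyth := Real.sin_sq_add_cos_sq θ
  have hexp : π ^ 2 - ((π - θ) * cos θ + sin θ) ^ 2 - ((π - θ) * sin θ) ^ 2
      = π ^ 2 - (π - θ) ^ 2 - (π - θ) * Real.sin (2 * θ) - sin θ ^ 2 := by
    rw [h2]; linear_combination (-(π - θ) ^ 2 + 1) * hpyth - hpyth
  have hA : (π - θ) * Real.sin (2 * θ) ≤ (π - θ) * (2 * θ) :=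
    mul_le_mul_of_nonneg_left hs2 (by linarith)
  have hB : sin θ ^ 2 ≤ θ ^ 2 := pow_le_pow_left₀ hsn hs 2
  nlinarith [hexp, hA, hB]

lemma key_pos {θ : ℝ} (h0 : 0 < θ) (hπ : θ < π) :
    ((π - θ) * sin θ) ^ 2 < π ^ 2 - ((π - θ) * cos θ + sin θ) ^ 2 := by
  have hs : sin θ < θ := Real.sin_lt h0
  have hs2 : Real.sin (2 * θ) ≤ 2 * θ := Real.sin_le (by linarith)
  have hsn : 0 ≤ sin θ := Real.sin_nonneg_of_nonneg_of_le_pi h0.le hπ.le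
  have h2 : Real.sin (2 * θ) = 2 * sin θ * cos θ := Real.sin_two_mul θ
  have hpyth := Real.sin_sq_add_cos_sq θ
  have hexp : π ^ 2 - ((π - θ) * cos θ + sin θ) ^ 2 - ((π - θ) * sin θ) ^ 2
      = π ^ 2 - (π - θ) ^ 2 - (π - θ) * Real.sin (2 * θ) - sin θ ^ 2 := by
    rw [h2]; linear_combination (-(π - θ) ^ 2 + 1) * hpyth - hpyth
  have hA : (π - θ) * Real.sin (2 * θ) ≤ (π - θ) * (2 * θ) :=
    mul_le_mul_of_nonneg_left hs2 (by linarith)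
  have hB : sin θ ^ 2 < θ ^ 2 := by nlinarith
  nlinarith [hexp, hA, hB]

noncomputable def fv (θ : ℝ) : ℝ := ((π - θ) * Real.cos θ + Real.sin θ) / π

noncomputable def g' (x : ℝ) : ℝ :=
  (π - x) * Real.sin x / (π * Real.sqrt (1 - fv x ^ 2))

lemma one_sub_fv_sq_pos {x : ℝ} (h0 : 0 < x) (hπ : x < π) : 0 < 1 - fv x ^ 2 := by
  have hkey := key_pos h0 hπ
  have hπ2 : (0:ℝ) < π ^ 2 := by positivity
  have : fv x ^ 2 = ((π - x) * Real.cos x + Real.sin x) ^ 2 / π ^ 2 := by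
    unfold fv; rw [div_pow]
  rw [this]
  rw [sub_pos, div_lt_one hπ2]
  nlinarith [sq_nonneg ((π - x) * Real.sin x)]

lemma g_hasDerivAt {x : ℝ} (h0 : 0 < x) (hπ : x < π) : HasDerivAt g (g' x) x := by
  have hpos := one_sub_fv_sq_pos h0 hπ
  have habs : |fv x| < 1 := by
    rw [← Real.sqrt_one, ← Real.sqrt_sq_eq_abs]
    exact Real.sqrt_lt_sqrt (sq_nonneg _) (by linarith)
  have h1 : fv x ≠ -1 := by rw [abs_lt] at habs; intro h; rw [h] at habs; linarith [habs.1]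
  have h2 : fv x ≠ 1 := by rw [abs_lt] at habs; intro h; rw [h] at habs; linarith [habs.2]
  have hF : HasDerivAt (fun θ : ℝ => (π - θ) * Real.cos θ + Real.sin θ)
      (-((π - x) * Real.sin x)) x := by
    have hA : HasDerivAt (fun θ : ℝ => π - θ) (-1) x := (hasDerivAt_id x).const_sub π
    have := (hA.mul (Real.hasDerivAt_cos x)).add (Real.hasDerivAt_sin x)
    refine HasDerivAt.congr_deriv this ?_
    have := Real.sin_sq_add_cos_sq x
    ring_nf
  have hf : HasDerivAt fv (-((π - x) * Real.sin x) / π) x := by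
    unfold fv
    exact hF.div_const π
  have harc := (Real.hasDerivAt_arccos h1 h2).comp x hf
  have hDne : Real.sqrt (1 - fv x ^ 2) ≠ 0 := by positivity
  have hπne : π ≠ 0 := Real.pi_ne_zero
  refine HasDerivAt.congr_deriv harc ?_
  unfold g'
  ring

theorem g_lipschitz : LipschitzOnWith 1 g (Set.Icc 0 π) := by
  have hgcont : Continuous g := by
    apply Real.continuous_arccos.comp
    continuity
  have hlip : LipschitzOnWith 1 g (Set.Ioo 0 π) := by
    apply (convex_Ioo (0:ℝ) π).lipschitzOnWith_of_nnnorm_hasDerivWithin_le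
      (f' := g') (fun x hx => (g_hasDerivAt hx.1 hx.2).hasDerivWithinAt)
    intro x hx
    rw [← NNReal.coe_le_coe, coe_nnnorm, Real.norm_eq_abs, NNReal.coe_one]
    have h0 := hx.1; have hπ := hx.2
    have hpos := one_sub_fv_sq_pos h0 hπ
    have hD : 0 < Real.sqrt (1 - fv x ^ 2) := Real.sqrt_pos.2 hpos
    have hsn : 0 ≤ Real.sin x := Real.sin_nonneg_of_nonneg_of_le_pi h0.le hπ.le
    have hnum : 0 ≤ (π - x) * Real.sin x := mul_nonneg (by linarith) hsn
    have hg'nn : 0 ≤ g' x := by unfold g'; positivity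
    rw [abs_of_nonneg hg'nn]
    unfold g'
    rw [div_le_one (by positivity)]
    have hq : ((π - x) * Real.sin x) ^ 2 ≤ π ^ 2 * (1 - fv x ^ 2) := by
      have hK := key_nonneg h0.le hπ.le
      have : π ^ 2 * (1 - fv x ^ 2) = π ^ 2 - ((π - x) * Real.cos x + Real.sin x) ^ 2 := by
        unfold fv; field_simp
      linarith [hK, this.ge, this.le]
    calc (π - x) * Real.sin x ≤ Real.sqrt (((π - x) * Real.sin x) ^ 2) := by
          rw [Real.sqrt_sq hnum]
      _ ≤ Real.sqrt (π ^ 2 * (1 - fv x ^ 2)) := Real.sqrt_le_sqrt hq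
      _ = π * Real.sqrt (1 - fv x ^ 2) := by
          rw [Real.sqrt_mul (by positivity), Real.sqrt_sq Real.pi_pos.le]
  rw [lipschitzOnWith_iff_dist_le_mul] at hlip ⊢
  intro x hx y hy
  have hclos : Set.Icc (0:ℝ) π = closure (Set.Ioo 0 π) := (closure_Ioo Real.pi_ne_zero.symm).symm
  have hset : IsClosed {p : ℝ × ℝ | dist (g p.1) (g p.2) ≤ 1 * dist p.1 p.2} := by
    apply isClosed_le
    · exact (hgcont.comp continuous_fst).dist (hgcont.comp continuous_snd)
    · exact continuous_const.mul (continuous_fst.dist continuous_snd)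
  have hmem : (x, y) ∈ closure (Set.Ioo (0:ℝ) π ×ˢ Set.Ioo (0:ℝ) π) := by
    rw [closure_prod_eq]
    exact ⟨hclos ▸ hx, hclos ▸ hy⟩
  have hsub : Set.Ioo (0:ℝ) π ×ˢ Set.Ioo (0:ℝ) π ⊆
      {p : ℝ × ℝ | dist (g p.1) (g p.2) ≤ 1 * dist p.1 p.2} := fun p hp => by
    simpa using hlip p.1 hp.1 p.2 hp.2
  have := hset.closure_subset_iff.2 hsub hmem
  simpa using this
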